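/- Let (Ω, 𝓕, (𝓕_t)_{t∈[0,1]}, P) be a filtered probability space, ν a Borel probability measure on 𝕏, and X : [0,1]×Ω → 𝕏 a jointly measurable, (𝓕_t)-adapted process such that X_t has law ν for every t ∈ [0,1]. For 1 ≤ i ≤ d2 let Φ_i, and for 1 ≤ i ≤ d3 let Γ_i, be random measures, i.e. measurable maps from Ω to the finite Borel measures on 𝕏×𝔽×[0,1] (respectively on 𝕏×𝔾×[0,1]), with E[Φ_i(𝕏×𝔽×[0,1])] < ∞ and E[Γ_i(𝕏×𝔾×[0,1])] < ∞. Define finite Borel measures λ_i on 𝕏×𝔽 and μ_i on 𝕏×𝔾 by λ_i(C) = E[Φ_i(C×(0,1])] and μ_i(C) = E[Γ_i(C×(0,1])]. Assume that for every h ∈ C²_b(𝕏) the function ℬ^F_i h is λ_i-integrable and ℬ^G_i h is μ_i-integrable for each i, and that the process M^h_t = h(X_t) − ∫₀ᵗ (𝒜h)(X_s) ds − Σ_{i=1}^{d2} ∫_{𝕏×𝔽×(0,t]} (ℬ^F_i h)(x,z) Φ_i(dx,dz,ds) − Σ_{i=1}^{d3} ∫_{𝕏×𝔾×(0,t]} (ℬ^G_i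 h)(x,y) Γ_i(dx,dy,ds), t ∈ [0,1], is an (𝓕_t)-martingale. Then for every h ∈ C²_b(𝕏): ∫𝒜h dν + Σ_{i=1}^{d2} ∫ℬ^F_i h dλ_i + Σ_{i=1}^{d3} ∫ℬ^G_i h dμ_i = 0. -/

import Mathlib

open MeasureTheory Filter Topology Set
open scoped NNReal ENNReal

noncomputable section

/-- `ℝ^d` with the Euclidean norm; the state space `𝕏`. -/
abbrev Euc (d : ℕ) := EuclideanSpace ℝ (Fin d)

/-- The cone `[0,∞)^m` of possible increments of the singular components. -/
abbrev Cone (m : ℕ) := Fin m → ℝ≥0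

/-- i-th standard basis vector. -/
def esingle {d : ℕ} (i : Fin d) : Euc d := EuclideanSpace.single i (1 : ℝ)

/-- Partial derivative `∂h/∂x_i`. -/
def pd {d : ℕ} (h : Euc d → ℝ) (i : Fin d) (x : Euc d) : ℝ := fderiv ℝ h x (esingle i)

/-- Second partial derivative `∂²h/∂x_i∂x_j`. -/
def pd2 {d : ℕ} (h : Euc d → ℝ) (i j : Fin d) (x : Euc d) : ℝ :=
  fderiv ℝ (fun y => pd h j y) x (esingle i)

/-- Test functions `C²_b(𝕏)`: twice continuously differentiable with gradient vanishing
outside a compact set. -/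
def TestFun {d : ℕ} (h : Euc d → ℝ) : Prop :=
  ContDiff ℝ 2 h ∧ ∃ K : Set (Euc d), IsCompact K ∧ ∀ x ∉ K, fderiv ℝ h x = 0

/-- Build a Euclidean vector from its coordinates. -/
def vecOf {d : ℕ} (v : Fin d → ℝ) : Euc d := (EuclideanSpace.equiv (Fin d) ℝ).symm v

variable {d d1 d2 d3 : ℕ}

/-- The second-order generator
`(𝒜h)(x) = (1/2)Σ_{ij} a_{ij}(x) ∂²h/∂x_i∂x_j + Σ_i β_i(x) ∂h/∂x_i`, where `a = σσᵀ`. -/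
def genA (β : Euc d → Euc d) (σ : Euc d → Fin d → Fin d1 → ℝ)
    (h : Euc d → ℝ) (x : Euc d) : ℝ :=
  (1/2) * ∑ i, ∑ j, (∑ k, σ x i k * σ x j k) * pd2 h i j x + ∑ i, β x i * pd h i x

/-- The intrinsic singular operator:
`(ℬ^F_i h)(x,z) = (h(x + φ(x)z) − h(x))/z_i` if `z_i > 0`, and
`(ℬ^F_i h)(x,z) = (φ(x)e_i)·∇h(x)` if `z_i = 0`. -/
def genBFv (φ : Euc d → Fin d → Fin d2 → ℝ) (h : Euc d → ℝ) (i : Fin d2)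
    (x : Euc d) (z : Cone d2) : ℝ :=
  if 0 < z i then
    (h (x + vecOf (fun j => ∑ k, φ x j k * (z k : ℝ))) - h x) / (z i : ℝ)
  else ∑ j, φ x j i * pd h j x

/-- The control operator:
`(ℬ^G_i h)(x,y) = (h(x − γ(x)y) − h(x))/y_i` if `y_i > 0`, and
`(ℬ^G_i h)(x,y) = −(γ(x)e_i)·∇h(x)` if `y_i = 0`. -/
def genBGv (γ : Euc d → Fin d → Fin d3 → ℝ) (h : Euc d → ℝ) (i : Fin d3)
    (x : Euc d) (y : Cone d3) : ℝ :=
  if 0 < y i then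
    (h (x - vecOf (fun j => ∑ k, γ x j k * (y k : ℝ))) - h x) / (y i : ℝ)
  else - ∑ j, γ x j i * pd h j x

/-- The process
`M^h_t = h(X_t) − ∫₀ᵗ(𝒜h)(X_s)ds − Σ_i ∫_{𝕏×𝔽×(0,t]}(ℬ^F_i h)dΦ_i − Σ_i ∫_{𝕏×𝔾×(0,t]}(ℬ^G_i h)dΓ_i`. -/
def Mproc {Ω : Type*} (β : Euc d → Euc d) (σ : Euc d → Fin d → Fin d1 → ℝ)
    (φ : Euc d → Fin d → Fin d2 → ℝ) (γ : Euc d → Fin d → Fin d3 → ℝ)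
    (h : Euc d → ℝ) (X : ℝ → Ω → Euc d)
    (Φ : Fin d2 → Ω → Measure ((Euc d × Cone d2) × ℝ))
    (Γ : Fin d3 → Ω → Measure ((Euc d × Cone d3) × ℝ))
    (t : ℝ) (ω : Ω) : ℝ :=
  h (X t ω) - (∫ s in Ioc (0:ℝ) t, genA β σ h (X s ω))
    - ∑ i, ∫ q in (univ : Set (Euc d × Cone d2)) ×ˢ Ioc (0:ℝ) t,
        genBFv φ h i q.1.1 q.1.2 ∂(Φ i ω)
    - ∑ i, ∫ q in (univ : Set (Euc d × Cone d3)) ×ˢ Ioc (0:ℝ) t,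
        genBGv γ h i q.1.1 q.1.2 ∂(Γ i ω)

/-- `M` is an `(ℱ_t)_{t∈[0,1]}`-martingale: it is adapted, integrable, and satisfies the
defining set-integral identity of the martingale property on `[0,1]`. -/
def IsMartingaleOn {Ω : Type*} {mΩ : MeasurableSpace Ω} (ℱ : Filtration ℝ mΩ)
    (P : Measure Ω) (M : ℝ → Ω → ℝ) : Prop :=
  (∀ t ∈ Icc (0:ℝ) 1, StronglyMeasurable[ℱ t] (M t)) ∧
  (∀ t ∈ Icc (0:ℝ) 1, Integrable (M t) P) ∧
  ∀ s t : ℝ, 0 ≤ s → s ≤ t → t ≤ 1 →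
    ∀ A : Set Ω, MeasurableSet[ℱ s] A → ∫ ω in A, M t ω ∂P = ∫ ω in A, M s ω ∂P

/-- A random measure `Ξ` on `S×[0,1]` has time-stationary increments: the joint law of
`(Ξ(C_k×(a_k+t, b_k+t]))_k` does not depend on `t`. -/
def StationaryIncrements {Ω S : Type*} {mΩ : MeasurableSpace Ω} [MeasurableSpace S]
    (P : Measure Ω) (Ξ : Ω → Measure (S × ℝ)) : Prop :=
  ∀ (n : ℕ) (C : Fin n → Set S), (∀ k, MeasurableSet (C k)) →
    ∀ (a b : Fin n → ℝ) (t : ℝ), 0 ≤ t →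
      (∀ k, 0 ≤ a k ∧ a k ≤ b k ∧ b k + t ≤ 1) →
      Measure.map (fun ω => fun k => Ξ ω ((C k) ×ˢ Ioc (a k + t) (b k + t))) P =
        Measure.map (fun ω => fun k => Ξ ω ((C k) ×ˢ Ioc (a k) (b k))) P


/- ### Auxiliary lemmas -/

lemma integral_bind_real {Ω S : Type*} [MeasurableSpace Ω] [MeasurableSpace S]
    (P : Measure Ω) (η : Ω → Measure S) (hη : Measurable η)
    (f : S → ℝ) (hf : Measurable f) (hfi : Integrable f (P.bind η)) :
    Integrable (fun ω => ∫ x, f x ∂(η ω)) P ∧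
      ∫ ω, ∫ x, f x ∂(η ω) ∂P = ∫ x, f x ∂(P.bind η) := by
  have hfn : Measurable fun x => (‖f x‖₊ : ℝ≥0∞) := hf.nnnorm.coe_nnreal_ennreal
  have hGm : Measurable fun ω => ∫⁻ x, ‖f x‖₊ ∂(η ω) :=
    (Measure.measurable_lintegral hfn).comp hη
  have hGfin : ∫⁻ ω, ∫⁻ x, ‖f x‖₊ ∂(η ω) ∂P < ⊤ := by
    rw [← Measure.lintegral_bind hη.aemeasurable hfn.aemeasurable]; exact hfi.2
  have hGae : ∀ᵐ ω ∂P, ∫⁻ x, (‖f x‖₊ : ℝ≥0∞) ∂(η ω) < ⊤ := ae_lt_top hGm hGfin.ne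
  set Fp : S → ℝ≥0∞ := fun x => ENNReal.ofReal (f x) with hFpdef
  set Fm : S → ℝ≥0∞ := fun x => ENNReal.ofReal (-f x) with hFmdef
  have hFpm : Measurable Fp := ENNReal.measurable_ofReal.comp hf
  have hFmm : Measurable Fm := ENNReal.measurable_ofReal.comp hf.neg
  have hFple : ∀ x, Fp x ≤ (‖f x‖₊ : ℝ≥0∞) := fun x => by
    rw [← enorm_eq_nnnorm, ← ofReal_norm]; exact ENNReal.ofReal_le_ofReal (le_abs_self _)
  have hFmle : ∀ x, Fm x ≤ (‖f x‖₊ : ℝ≥0∞) := fun x => by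
    rw [← enorm_eq_nnnorm, ← ofReal_norm]; exact ENNReal.ofReal_le_ofReal (neg_le_abs _)
  have hgpm : Measurable fun ω => ∫⁻ x, Fp x ∂(η ω) :=
    (Measure.measurable_lintegral hFpm).comp hη
  have hgmm : Measurable fun ω => ∫⁻ x, Fm x ∂(η ω) :=
    (Measure.measurable_lintegral hFmm).comp hη
  have hgple : ∀ ω, ∫⁻ x, Fp x ∂(η ω) ≤ ∫⁻ x, ‖f x‖₊ ∂(η ω) :=
    fun ω => lintegral_mono hFple
  have hgmle : ∀ ω, ∫⁻ x, Fm x ∂(η ω) ≤ ∫⁻ x, ‖f x‖₊ ∂(η ω) :=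
    fun ω => lintegral_mono hFmle
  have hgpfin : ∫⁻ ω, ∫⁻ x, Fp x ∂(η ω) ∂P ≠ ⊤ :=
    ((lintegral_mono hgple).trans_lt hGfin).ne
  have hgmfin : ∫⁻ ω, ∫⁻ x, Fm x ∂(η ω) ∂P ≠ ⊤ :=
    ((lintegral_mono hgmle).trans_lt hGfin).ne
  have hip : Integrable (fun ω => (∫⁻ x, Fp x ∂(η ω)).toReal) P :=
    integrable_toReal_of_lintegral_ne_top hgpm.aemeasurable hgpfin
  have him : Integrable (fun ω => (∫⁻ x, Fm x ∂(η ω)).toReal) P :=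
    integrable_toReal_of_lintegral_ne_top hgmm.aemeasurable hgmfin
  have hae : (fun ω => ∫ x, f x ∂(η ω)) =ᵐ[P]
      fun ω => (∫⁻ x, Fp x ∂(η ω)).toReal - (∫⁻ x, Fm x ∂(η ω)).toReal := by
    filter_upwards [hGae] with ω hω
    have hfi' : Integrable f (η ω) := ⟨hf.aestronglyMeasurable, hω⟩
    exact integral_eq_lintegral_pos_part_sub_lintegral_neg_part hfi'
  have hInt : Integrable (fun ω => ∫ x, f x ∂(η ω)) P :=
    (hip.sub him).congr hae.symm
  refine ⟨hInt, ?_⟩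
  rw [integral_congr_ae hae, integral_sub hip him,
    integral_toReal hgpm.aemeasurable
      (hGae.mono fun ω hω => (hgple ω).trans_lt hω),
    integral_toReal hgmm.aemeasurable
      (hGae.mono fun ω hω => (hgmle ω).trans_lt hω),
    ← Measure.lintegral_bind hη.aemeasurable hFpm.aemeasurable, ← Measure.lintegral_bind hη.aemeasurable hFmm.aemeasurable,
    ← integral_eq_lintegral_pos_part_sub_lintegral_neg_part hfi]

-- derivative facts
section derivs
variable {h : Euc d → ℝ}

lemma pd_cont (hC2 : ContDiff ℝ 2 h) (i : Fin d) : Continuous (pd h i) :=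
  (hC2.continuous_fderiv (by norm_num)).clm_apply continuous_const

lemma pdC1 (hC2 : ContDiff ℝ 2 h) (j : Fin d) : ContDiff ℝ 1 (pd h j) := by
  have h1 : ContDiff ℝ 1 (fderiv ℝ h) :=
    (contDiff_succ_iff_fderiv.mp (by exact_mod_cast hC2 : ContDiff ℝ ((1:ℕ)+1) h)).2.2
  exact (ContinuousLinearMap.apply ℝ ℝ (esingle j)).contDiff.comp h1

lemma pd2_cont (hC2 : ContDiff ℝ 2 h) (i j : Fin d) : Continuous (pd2 h i j) :=
  ((pdC1 hC2 j).continuous_fderiv one_ne_zero).clm_apply continuous_const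

lemma pd_zero {K : Set (Euc d)} (hK0 : ∀ x ∉ K, fderiv ℝ h x = 0)
    {x : Euc d} (hx : x ∉ K) (i : Fin d) : pd h i x = 0 := by
  simp [pd, hK0 x hx]

lemma pd2_zero {K : Set (Euc d)} (hK : IsCompact K) (hK0 : ∀ x ∉ K, fderiv ℝ h x = 0)
    {x : Euc d} (hx : x ∉ K) (i j : Fin d) : pd2 h i j x = 0 := by
  have hopen : IsOpen Kᶜ := hK.isClosed.isOpen_compl
  have hev : (fun y => pd h j y) =ᶠ[𝓝 x] fun _ => (0:ℝ) :=
    Filter.eventuallyEq_of_mem (hopen.mem_nhds hx) (fun y hy => pd_zero hK0 hy j)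
  rw [pd2, hev.fderiv_eq]
  simp
end derivs

lemma bddOn_compact {E : Type*} [TopologicalSpace E] {K : Set E} (hK : IsCompact K)
    (f : E → ℝ) (hf : ∀ x : E, ∃ U ∈ 𝓝 x, ∃ C : ℝ, ∀ y ∈ U, f y ≤ C) :
    ∃ C, ∀ y ∈ K, f y ≤ C := by
  choose U hU C hC using hf
  obtain ⟨t, _, ht⟩ := hK.elim_nhds_subcover U (fun x _ => hU x)
  refine ⟨∑ x ∈ t, |C x|, fun y hy => ?_⟩
  obtain ⟨x, hx, hyx⟩ := Set.mem_iUnion₂.mp (ht hy)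
  calc f y ≤ C x := hC x y hyx
    _ ≤ |C x| := le_abs_self _
    _ ≤ ∑ x ∈ t, |C x| := Finset.single_le_sum (fun (x : E) _ => abs_nonneg (C x)) hx

/-- global bound for a continuous function vanishing off a compact set -/
lemma glob_bound {E : Type*} [TopologicalSpace E] {K : Set E} (hK : IsCompact K)
    {g : E → ℝ} (hg : Continuous g) (h0 : ∀ x ∉ K, g x = 0) :
    ∃ C, 0 ≤ C ∧ ∀ x, |g x| ≤ C := by
  obtain ⟨C, hC⟩ := hK.exists_bound_of_continuousOn hg.continuousOn
  refine ⟨max C 0, le_max_right _ _, fun x => ?_⟩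
  by_cases hx : x ∈ K
  · exact (hC x hx).trans (le_max_left _ _)
  · simp [h0 x hx, le_max_right]

lemma abs_sum_le_card_mul {n : ℕ} (f : Fin n → ℝ) (B : ℝ) (h : ∀ i, |f i| ≤ B) :
    |∑ i, f i| ≤ n * B := by
  calc |∑ i, f i| ≤ ∑ i, |f i| := Finset.abs_sum_le_sum_abs _ _
    _ ≤ ∑ _i : Fin n, B := Finset.sum_le_sum (fun i _ => h i)
    _ = n * B := by simp [Finset.sum_const, Finset.card_univ, nsmul_eq_mul]

lemma genA_bound (β : Euc d → Euc d) (σ : Euc d → Fin d → Fin d1 → ℝ)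
    (hβloc : ∀ x : Euc d, ∃ U ∈ 𝓝 x, ∃ C : ℝ, ∀ y ∈ U, ‖β y‖ ≤ C)
    (hσloc : ∀ x : Euc d, ∃ U ∈ 𝓝 x, ∃ C : ℝ, ∀ y ∈ U, ∀ i k, |σ y i k| ≤ C)
    {h : Euc d → ℝ} (th : TestFun h) :
    ∃ C, 0 ≤ C ∧ ∀ x, |genA β σ h x| ≤ C := by
  obtain ⟨hC2, K, hK, hK0⟩ := th
  -- global bounds for pd, pd2
  have hpd := fun i => glob_bound hK (pd_cont hC2 i) (fun x hx => pd_zero hK0 hx i)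
  choose Cp hCp0 hCp using hpd
  have hpd2 := fun (p : Fin d × Fin d) =>
    glob_bound hK (pd2_cont hC2 p.1 p.2) (fun x hx => pd2_zero hK hK0 hx p.1 p.2)
  choose Cq hCq0 hCq using hpd2
  set CP : ℝ := ∑ i, Cp i with hCP
  set CQ : ℝ := ∑ p : Fin d × Fin d, Cq p with hCQ
  have hCP0 : 0 ≤ CP := Finset.sum_nonneg fun i _ => hCp0 i
  have hCQ0 : 0 ≤ CQ := Finset.sum_nonneg fun p _ => hCq0 p
  have hCPb : ∀ x i, |pd h i x| ≤ CP := fun x i =>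
    (hCp i x).trans (Finset.single_le_sum (fun j _ => hCp0 j) (Finset.mem_univ i))
  have hCQb : ∀ x i j, |pd2 h i j x| ≤ CQ := fun x i j =>
    (hCq (i, j) x).trans (Finset.single_le_sum (fun p _ => hCq0 p) (Finset.mem_univ (i, j)))
  -- bound for β on K
  obtain ⟨Cβ, hCβ⟩ := bddOn_compact hK (fun x => ‖β x‖) hβloc
  set CB : ℝ := max Cβ 0 with hCB
  have hCB0 : 0 ≤ CB := le_max_right _ _
  have hCBb : ∀ x ∈ K, ∀ i, |β x i| ≤ CB := by
    intro x hx i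
    have h1 : |β x i| ≤ ‖β x‖ := by
      rw [EuclideanSpace.norm_eq, ← Real.sqrt_sq_eq_abs]
      apply Real.sqrt_le_sqrt
      exact (Finset.single_le_sum (f := fun j => ‖β x j‖ ^ 2) (fun j _ => sq_nonneg _)
        (Finset.mem_univ i)).trans_eq' (by rw [Real.norm_eq_abs, sq_abs])
    exact h1.trans ((hCβ x hx).trans (le_max_left _ _))
  -- bound for σ on K
  obtain ⟨Cσ, hCσ⟩ := bddOn_compact hK (fun x => ∑ i, ∑ k, |σ x i k|) (by
    intro x
    obtain ⟨U, hU, C, hC⟩ := hσloc x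
    refine ⟨U, hU, ∑ _i : Fin d, ∑ _k : Fin d1, |C|, fun y hy => ?_⟩
    exact Finset.sum_le_sum fun i _ => Finset.sum_le_sum fun k _ =>
      (hC y hy i k).trans (le_abs_self C))
  set CS : ℝ := max Cσ 0 with hCS
  have hCS0 : 0 ≤ CS := le_max_right _ _
  have hCSb : ∀ x ∈ K, ∀ i k, |σ x i k| ≤ CS := by
    intro x hx i k
    have h2 : |σ x i k| ≤ ∑ k', |σ x i k'| :=
      Finset.single_le_sum (f := fun k' => |σ x i k'|) (fun k' _ => abs_nonneg _) (Finset.mem_univ k)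
    have h1 : |σ x i k| ≤ ∑ i', ∑ k', |σ x i' k'| :=
      h2.trans (Finset.single_le_sum (f := fun i' => ∑ k', |σ x i' k'|)
        (fun i' _ => Finset.sum_nonneg fun k' _ => abs_nonneg _) (Finset.mem_univ i))
    exact h1.trans ((hCσ x hx).trans (le_max_left _ _))
  refine ⟨1/2 * ((d:ℝ) * ((d:ℝ) * (((d1:ℝ) * (CS * CS)) * CQ))) + (d:ℝ) * (CB * CP), ?_, ?_⟩
  · positivity
  intro x
  by_cases hx : x ∈ K
  · have hS1 : |∑ i, ∑ j, (∑ k, σ x i k * σ x j k) * pd2 h i j x| ≤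
        (d:ℝ) * ((d:ℝ) * (((d1:ℝ) * (CS * CS)) * CQ)) := by
      apply abs_sum_le_card_mul
      intro i
      apply abs_sum_le_card_mul
      intro j
      rw [abs_mul]
      refine mul_le_mul ?_ (hCQb x i j) (abs_nonneg _) (by positivity)
      apply abs_sum_le_card_mul
      intro k
      rw [abs_mul]
      exact mul_le_mul (hCSb x hx i k) (hCSb x hx j k) (abs_nonneg _) hCS0
    have hS2 : |∑ i, β x i * pd h i x| ≤ (d:ℝ) * (CB * CP) := by
      apply abs_sum_le_card_mul
      intro i
      rw [abs_mul]
      exact mul_le_mul (hCBb x hx i) (hCPb x i) (abs_nonneg _) hCB0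
    calc |genA β σ h x| ≤
        1/2 * |∑ i, ∑ j, (∑ k, σ x i k * σ x j k) * pd2 h i j x|
          + |∑ i, β x i * pd h i x| := by
          rw [genA]
          refine (abs_add_le _ _).trans ?_
          rw [abs_mul]
          simp [abs_of_nonneg]
      _ ≤ _ := by
          have := mul_le_mul_of_nonneg_left hS1 (by norm_num : (0:ℝ) ≤ 1/2)
          linarith
  · have hz : genA β σ h x = 0 := by
      simp [genA, pd_zero hK0 hx, pd2_zero hK hK0 hx]
    rw [hz]
    simp
    positivity

lemma genA_meas (β : Euc d → Euc d) (σ : Euc d → Fin d → Fin d1 → ℝ)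
    (hβm : Measurable β) (hσm : Measurable σ) {h : Euc d → ℝ} (hC2 : ContDiff ℝ 2 h) :
    Measurable (genA β σ h) := by
  apply Measurable.add
  · apply Measurable.const_mul
    apply Finset.measurable_sum
    intro i _
    apply Finset.measurable_sum
    intro j _
    apply Measurable.mul
    · apply Finset.measurable_sum
      intro k _
      exact (hσm.eval.eval).mul (hσm.eval.eval)
    · exact (pd2_cont hC2 i j).measurable
  · apply Finset.measurable_sum
    intro i _
    exact (((EuclideanSpace.proj i : Euc d →L[ℝ] ℝ).continuous.measurable).comp hβm).mul
      (pd_cont hC2 i).measurable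

lemma genBF_meas (φ : Euc d → Fin d → Fin d2 → ℝ) (hφm : Measurable φ)
    {h : Euc d → ℝ} (hC2 : ContDiff ℝ 2 h) (i : Fin d2) :
    Measurable (fun q : Euc d × Cone d2 => genBFv φ h i q.1 q.2) := by
  have hh : Measurable h := hC2.continuous.measurable
  unfold genBFv
  apply Measurable.ite
  · exact measurableSet_lt measurable_const (measurable_snd.eval)
  · apply Measurable.div
    · apply Measurable.sub
      · apply hh.comp
        apply Measurable.add measurable_fst
        apply Continuous.measurable (EuclideanSpace.equiv (Fin d) ℝ).symm.continuous |>.comp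
        apply measurable_pi_lambda
        intro j
        apply Finset.measurable_sum
        intro k _
        exact ((hφm.eval.eval).comp measurable_fst).mul
          (measurable_coe_nnreal_real.comp ((measurable_pi_apply k).comp measurable_snd))
      · exact hh.comp measurable_fst
    · exact measurable_coe_nnreal_real.comp ((measurable_pi_apply i).comp measurable_snd)
  · apply Finset.measurable_sum
    intro j _
    exact ((hφm.eval.eval).comp measurable_fst).mul
      ((pd_cont hC2 j).measurable.comp measurable_fst)

lemma genBG_meas {d d3 : ℕ} (γ : Euc d → Fin d → Fin d3 → ℝ) (hγm : Measurable γ)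
    {h : Euc d → ℝ} (hC2 : ContDiff ℝ 2 h) (i : Fin d3) :
    Measurable (fun q : Euc d × Cone d3 => genBGv γ h i q.1 q.2) := by
  have hh : Measurable h := hC2.continuous.measurable
  unfold genBGv
  apply Measurable.ite
  · exact measurableSet_lt measurable_const (measurable_snd.eval)
  · apply Measurable.div
    · apply Measurable.sub
      · apply hh.comp
        apply Measurable.sub measurable_fst
        apply Continuous.measurable (EuclideanSpace.equiv (Fin d) ℝ).symm.continuous |>.comp
        apply measurable_pi_lambda
        intro j
        apply Finset.measurable_sum
        intro k _
        exact ((hγm.eval.eval).comp measurable_fst).mul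
          (measurable_coe_nnreal_real.comp ((measurable_pi_apply k).comp measurable_snd))
      · exact hh.comp measurable_fst
    · exact measurable_coe_nnreal_real.comp ((measurable_pi_apply i).comp measurable_snd)
  · apply Measurable.neg
    apply Finset.measurable_sum
    intro j _
    exact ((hγm.eval.eval).comp measurable_fst).mul
      ((pd_cont hC2 j).measurable.comp measurable_fst)

/-- If `X` is a stationary adapted process with marginal law `ν`, `Φ_i`,
`Γ_i` are random measures with finite expected total mass on `𝕏×𝔽×[0,1]` (resp.
`𝕏×𝔾×[0,1]`), `λ_i`, `μ_i` are the associated expected occupation measures, the relevant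
integrands are integrable, and for every test function `h` the process `M^h` is an
`(ℱ_t)`-martingale, then for every test function `h`:
`∫𝒜h dν + Σ_i ∫ℬ^F_i h dλ_i + Σ_i ∫ℬ^G_i h dμ_i = 0`. -/
theorem stmt0 {d d1 d2 d3 : ℕ} {Ω : Type*} {mΩ : MeasurableSpace Ω}
    (P : Measure Ω) (hP : IsProbabilityMeasure P) (ℱ : Filtration ℝ mΩ)
    (β : Euc d → Euc d) (σ : Euc d → Fin d → Fin d1 → ℝ)
    (φ : Euc d → Fin d → Fin d2 → ℝ) (γ : Euc d → Fin d → Fin d3 → ℝ)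
    (hβm : Measurable β) (hσm : Measurable σ) (hφm : Measurable φ) (hγm : Measurable γ)
    (hβloc : ∀ x : Euc d, ∃ U ∈ 𝓝 x, ∃ C : ℝ, ∀ y ∈ U, ‖β y‖ ≤ C)
    (hσloc : ∀ x : Euc d, ∃ U ∈ 𝓝 x, ∃ C : ℝ, ∀ y ∈ U, ∀ i k, |σ y i k| ≤ C)
    (ν : Measure (Euc d)) (hν : IsProbabilityMeasure ν)
    (X : ℝ → Ω → Euc d)
    (hXjm : Measurable (Function.uncurry X))
    (hXad : ∀ t ∈ Icc (0:ℝ) 1, Measurable[ℱ t] (X t))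
    (hXlaw : ∀ t ∈ Icc (0:ℝ) 1, Measure.map (X t) P = ν)
    (Φ : Fin d2 → Ω → Measure ((Euc d × Cone d2) × ℝ))
    (Γ : Fin d3 → Ω → Measure ((Euc d × Cone d3) × ℝ))
    (hΦm : ∀ i (A : Set ((Euc d × Cone d2) × ℝ)), MeasurableSet A →
      Measurable fun ω => Φ i ω A)
    (hΓm : ∀ i (A : Set ((Euc d × Cone d3) × ℝ)), MeasurableSet A →
      Measurable fun ω => Γ i ω A)
    (hΦfin : ∀ i, ∫⁻ ω, Φ i ω ((univ : Set (Euc d × Cone d2)) ×ˢ Icc (0:ℝ) 1) ∂P ≠ ⊤)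
    (hΓfin : ∀ i, ∫⁻ ω, Γ i ω ((univ : Set (Euc d × Cone d3)) ×ˢ Icc (0:ℝ) 1) ∂P ≠ ⊤)
    (lam : Fin d2 → Measure (Euc d × Cone d2))
    (mu : Fin d3 → Measure (Euc d × Cone d3))
    (hlamfin : ∀ i, IsFiniteMeasure (lam i)) (hmufin : ∀ i, IsFiniteMeasure (mu i))
    (hlam : ∀ i (C : Set (Euc d × Cone d2)), MeasurableSet C →
      lam i C = ∫⁻ ω, Φ i ω (C ×ˢ Ioc (0:ℝ) 1) ∂P)
    (hmu : ∀ i (C : Set (Euc d × Cone d3)), MeasurableSet C →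
      mu i C = ∫⁻ ω, Γ i ω (C ×ˢ Ioc (0:ℝ) 1) ∂P)
    (hintF : ∀ h : Euc d → ℝ, TestFun h → ∀ i,
      Integrable (fun q : Euc d × Cone d2 => genBFv φ h i q.1 q.2) (lam i))
    (hintG : ∀ h : Euc d → ℝ, TestFun h → ∀ i,
      Integrable (fun q : Euc d × Cone d3 => genBGv γ h i q.1 q.2) (mu i))
    (hmart : ∀ h : Euc d → ℝ, TestFun h →
      IsMartingaleOn ℱ P (Mproc β σ φ γ h X Φ Γ)) :
    ∀ h : Euc d → ℝ, TestFun h →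
      ∫ x, genA β σ h x ∂ν
        + ∑ i, ∫ q, genBFv φ h i q.1 q.2 ∂(lam i)
        + ∑ i, ∫ q, genBGv γ h i q.1 q.2 ∂(mu i) = 0 := by
  intro h th
  obtain ⟨hC2, K, hK, hK0⟩ := th
  have th' : TestFun h := ⟨hC2, K, hK, hK0⟩
  have hhc : Continuous h := hC2.continuous
  obtain ⟨hadp, hint, hmg⟩ := hmart h th'
  have hXmeas : ∀ t : ℝ, Measurable (X t) := fun t => hXjm.comp measurable_prodMk_left
  have hlawint : ∀ t ∈ Icc (0:ℝ) 1, ∫ ω, h (X t ω) ∂P = ∫ x, h x ∂ν := by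
    intro t ht
    rw [← hXlaw t ht,
      integral_map (hXmeas t).aemeasurable hhc.measurable.aestronglyMeasurable]
  have key : ∫ ω, Mproc β σ φ γ h X Φ Γ 1 ω ∂P = ∫ ω, Mproc β σ φ γ h X Φ Γ 0 ω ∂P := by
    have := hmg 0 1 le_rfl zero_le_one le_rfl univ MeasurableSet.univ
    simpa [Measure.restrict_univ] using this
  have hM0 : ∀ ω, Mproc β σ φ γ h X Φ Γ 0 ω = h (X 0 ω) := by
    intro ω
    unfold Mproc
    rw [Set.Ioc_self]
    simp [Set.prod_empty]
  obtain ⟨CA, hCA0, hCA⟩ := genA_bound β σ hβloc hσloc th'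
  have hgm : Measurable (genA β σ h) := genA_meas β σ hβm hσm hC2
  haveI hfinT : IsFiniteMeasure (volume.restrict (Ioc (0:ℝ) 1)) := by
    constructor
    rw [Measure.restrict_apply_univ]
    simp [Real.volume_Ioc]
  have hFmeas : Measurable fun p : Ω × ℝ => genA β σ h (X p.2 p.1) :=
    hgm.comp (hXjm.comp measurable_swap)
  have hprodInt : Integrable (fun p : Ω × ℝ => genA β σ h (X p.2 p.1))
      (P.prod (volume.restrict (Ioc (0:ℝ) 1))) := by
    refine (integrable_const CA).mono' hFmeas.aestronglyMeasurable ?_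
    exact ae_of_all _ fun p => by simpa [Real.norm_eq_abs] using hCA (X p.2 p.1)
  set f1 : Ω → ℝ := fun ω => ∫ s in Ioc (0:ℝ) 1, genA β σ h (X s ω) with hf1def
  have hf1meas : StronglyMeasurable f1 := hFmeas.stronglyMeasurable.integral_prod_right'
  have hf1int : Integrable f1 P := by
    refine (integrable_const CA).mono' hf1meas.aestronglyMeasurable (ae_of_all _ fun ω => ?_)
    have hb : ‖f1 ω‖ ≤ CA * ((volume.restrict (Ioc (0:ℝ) 1)) univ).toReal :=
      norm_integral_le_of_norm_le_const (ae_of_all _ fun s => by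
        simpa [Real.norm_eq_abs] using hCA (X s ω))
    have h1 : ((volume.restrict (Ioc (0:ℝ) 1)) univ).toReal = 1 := by
      rw [Measure.restrict_apply_univ]
      simp [Real.volume_Ioc]
    rw [h1, mul_one] at hb
    exact hb
  have hf1val : ∫ ω, f1 ω ∂P = ∫ x, genA β σ h x ∂ν := by
    have hs := integral_integral_swap (f := fun ω s => genA β σ h (X s ω)) hprodInt
    have hinner : ∀ s ∈ Ioc (0:ℝ) 1,
        (∫ ω, genA β σ h (X s ω) ∂P) = ∫ x, genA β σ h x ∂ν := by
      intro s hs'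
      rw [← hXlaw s ⟨hs'.1.le, hs'.2⟩,
        integral_map (hXmeas s).aemeasurable hgm.aestronglyMeasurable]
    calc ∫ ω, f1 ω ∂P = ∫ s in Ioc (0:ℝ) 1, ∫ ω, genA β σ h (X s ω) ∂P := hs
      _ = ∫ _s in Ioc (0:ℝ) 1, (∫ x, genA β σ h x ∂ν) :=
          setIntegral_congr_fun measurableSet_Ioc hinner
      _ = ∫ x, genA β σ h x ∂ν := by
          rw [setIntegral_const]
          simp [Real.volume_Ioc]
  have hΦall : ∀ i, Integrable (fun ω => ∫ q in (univ : Set (Euc d × Cone d2)) ×ˢ Ioc (0:ℝ) 1,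
        genBFv φ h i q.1.1 q.1.2 ∂(Φ i ω)) P ∧
      ∫ ω, (∫ q in (univ : Set (Euc d × Cone d2)) ×ˢ Ioc (0:ℝ) 1,
        genBFv φ h i q.1.1 q.1.2 ∂(Φ i ω)) ∂P = ∫ q, genBFv φ h i q.1 q.2 ∂(lam i) := by
    intro i
    have hfmeas : Measurable (fun q : Euc d × Cone d2 => genBFv φ h i q.1 q.2) :=
      genBF_meas φ hφm hC2 i
    set η : Ω → Measure (Euc d × Cone d2) := fun ω =>
      Measure.map Prod.fst ((Φ i ω).restrict
        ((univ : Set (Euc d × Cone d2)) ×ˢ Ioc (0:ℝ) 1)) with hηdef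
    have hset : ∀ C : Set (Euc d × Cone d2),
        Prod.fst ⁻¹' C ∩ ((univ : Set (Euc d × Cone d2)) ×ˢ Ioc (0:ℝ) 1)
          = C ×ˢ Ioc (0:ℝ) 1 := by
      intro C
      ext q
      simp [Set.mem_prod]
    have hηC : ∀ ω (C : Set (Euc d × Cone d2)), MeasurableSet C →
        η ω C = Φ i ω (C ×ˢ Ioc (0:ℝ) 1) := by
      intro ω C hC
      simp only [hηdef]
      rw [Measure.map_apply measurable_fst hC,
        Measure.restrict_apply (measurable_fst hC), hset C]
    have hηm : Measurable η := Measure.measurable_of_measurable_coe _ (fun C hC => by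
      simp_rw [hηC _ C hC]
      exact hΦm i _ (hC.prod measurableSet_Ioc))
    have hbind : P.bind η = lam i := by
      refine Measure.ext fun C hC => ?_
      rw [Measure.bind_apply hC hηm.aemeasurable, hlam i C hC]
      exact lintegral_congr fun ω => hηC ω C hC
    have hfl : Integrable (fun q : Euc d × Cone d2 => genBFv φ h i q.1 q.2) (P.bind η) := by
      rw [hbind]
      exact hintF h th' i
    obtain ⟨hFint, hFval⟩ := integral_bind_real P η hηm _ hfmeas hfl
    have hFeq : (fun ω => ∫ q in (univ : Set (Euc d × Cone d2)) ×ˢ Ioc (0:ℝ) 1,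
        genBFv φ h i q.1.1 q.1.2 ∂(Φ i ω))
          = fun ω => ∫ x, genBFv φ h i x.1 x.2 ∂(η ω) := by
      funext ω
      simp only [hηdef]
      rw [integral_map measurable_fst.aemeasurable hfmeas.aestronglyMeasurable]
    refine ⟨?_, ?_⟩
    · rw [hFeq]; exact hFint
    · rw [hFeq, hFval, hbind]
  have hΓall : ∀ i, Integrable (fun ω => ∫ q in (univ : Set (Euc d × Cone d3)) ×ˢ Ioc (0:ℝ) 1,
        genBGv γ h i q.1.1 q.1.2 ∂(Γ i ω)) P ∧
      ∫ ω, (∫ q in (univ : Set (Euc d × Cone d3)) ×ˢ Ioc (0:ℝ) 1,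
        genBGv γ h i q.1.1 q.1.2 ∂(Γ i ω)) ∂P = ∫ q, genBGv γ h i q.1 q.2 ∂(mu i) := by
    intro i
    have hfmeas : Measurable (fun q : Euc d × Cone d3 => genBGv γ h i q.1 q.2) :=
      genBG_meas γ hγm hC2 i
    set η : Ω → Measure (Euc d × Cone d3) := fun ω =>
      Measure.map Prod.fst ((Γ i ω).restrict
        ((univ : Set (Euc d × Cone d3)) ×ˢ Ioc (0:ℝ) 1)) with hηdef
    have hset : ∀ C : Set (Euc d × Cone d3),
        Prod.fst ⁻¹' C ∩ ((univ : Set (Euc d × Cone d3)) ×ˢ Ioc (0:ℝ) 1)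
          = C ×ˢ Ioc (0:ℝ) 1 := by
      intro C
      ext q
      simp [Set.mem_prod]
    have hηC : ∀ ω (C : Set (Euc d × Cone d3)), MeasurableSet C →
        η ω C = Γ i ω (C ×ˢ Ioc (0:ℝ) 1) := by
      intro ω C hC
      simp only [hηdef]
      rw [Measure.map_apply measurable_fst hC,
        Measure.restrict_apply (measurable_fst hC), hset C]
    have hηm : Measurable η := Measure.measurable_of_measurable_coe _ (fun C hC => by
      simp_rw [hηC _ C hC]
      exact hΓm i _ (hC.prod measurableSet_Ioc))
    have hbind : P.bind η = mu i := by
      refine Measure.ext fun C hC => ?_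
      rw [Measure.bind_apply hC hηm.aemeasurable, hmu i C hC]
      exact lintegral_congr fun ω => hηC ω C hC
    have hfl : Integrable (fun q : Euc d × Cone d3 => genBGv γ h i q.1 q.2) (P.bind η) := by
      rw [hbind]
      exact hintG h th' i
    obtain ⟨hFint, hFval⟩ := integral_bind_real P η hηm _ hfmeas hfl
    have hFeq : (fun ω => ∫ q in (univ : Set (Euc d × Cone d3)) ×ˢ Ioc (0:ℝ) 1,
        genBGv γ h i q.1.1 q.1.2 ∂(Γ i ω))
          = fun ω => ∫ x, genBGv γ h i x.1 x.2 ∂(η ω) := by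
      funext ω
      simp only [hηdef]
      rw [integral_map measurable_fst.aemeasurable hfmeas.aestronglyMeasurable]
    refine ⟨?_, ?_⟩
    · rw [hFeq]; exact hFint
    · rw [hFeq, hFval, hbind]
  set SF : Ω → ℝ := fun ω => ∑ i, ∫ q in (univ : Set (Euc d × Cone d2)) ×ˢ Ioc (0:ℝ) 1,
      genBFv φ h i q.1.1 q.1.2 ∂(Φ i ω) with hSFdef
  set SG : Ω → ℝ := fun ω => ∑ i, ∫ q in (univ : Set (Euc d × Cone d3)) ×ˢ Ioc (0:ℝ) 1,
      genBGv γ h i q.1.1 q.1.2 ∂(Γ i ω) with hSGdef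
  have hSFint : Integrable SF P := integrable_finset_sum _ (fun i _ => (hΦall i).1)
  have hSGint : Integrable SG P := integrable_finset_sum _ (fun i _ => (hΓall i).1)
  have hSFval : ∫ ω, SF ω ∂P = ∑ i, ∫ q, genBFv φ h i q.1 q.2 ∂(lam i) := by
    simp only [hSFdef]
    rw [integral_finset_sum _ (fun i _ => (hΦall i).1)]
    exact Finset.sum_congr rfl fun i _ => (hΦall i).2
  have hSGval : ∫ ω, SG ω ∂P = ∑ i, ∫ q, genBGv γ h i q.1 q.2 ∂(mu i) := by
    simp only [hSGdef]
    rw [integral_finset_sum _ (fun i _ => (hΓall i).1)]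
    exact Finset.sum_congr rfl fun i _ => (hΓall i).2
  have hM1int : Integrable (Mproc β σ φ γ h X Φ Γ 1) P := hint 1 ⟨zero_le_one, le_rfl⟩
  set g0 : Ω → ℝ := fun ω => h (X 1 ω) with hg0def
  have hM1eq : Mproc β σ φ γ h X Φ Γ 1 = fun ω => g0 ω - f1 ω - SF ω - SG ω := by
    funext ω
    simp only [hg0def, hf1def, hSFdef, hSGdef]
    rfl
  have hg0int : Integrable g0 P := by
    have heq : g0 = fun ω => Mproc β σ φ γ h X Φ Γ 1 ω + (f1 ω + (SF ω + SG ω)) := by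
      funext ω
      rw [hM1eq]
      ring
    rw [heq]
    exact hM1int.add (hf1int.add (hSFint.add hSGint))
  have hsplit : ∫ ω, Mproc β σ φ γ h X Φ Γ 1 ω ∂P =
      ∫ ω, g0 ω ∂P - ∫ ω, f1 ω ∂P - ∫ ω, SF ω ∂P - ∫ ω, SG ω ∂P := by
    simp only [hM1eq]
    have i1 : Integrable (fun ω => g0 ω - f1 ω) P := hg0int.sub hf1int
    have i2 : Integrable (fun ω => g0 ω - f1 ω - SF ω) P := i1.sub hSFint
    rw [integral_sub i2 hSGint, integral_sub i1 hSFint, integral_sub hg0int hf1int]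
  have hM0val : ∫ ω, Mproc β σ φ γ h X Φ Γ 0 ω ∂P = ∫ x, h x ∂ν := by
    rw [show (fun ω => Mproc β σ φ γ h X Φ Γ 0 ω) = fun ω => h (X 0 ω) from funext hM0]
    exact hlawint 0 ⟨le_rfl, zero_le_one⟩
  have hg0val : ∫ ω, g0 ω ∂P = ∫ x, h x ∂ν := hlawint 1 ⟨zero_le_one, le_rfl⟩
  rw [hsplit, hM0val, hg0val, hf1val, hSFval, hSGval] at key
  linarith
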